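/- In the suffix-trie relabelling construction, if node u receives label i and node v receives label j with u a strict ancestor of v, then i < j. -/

import Mathlib

/-- The suffix-trie relabelling construction (see the paper): `trieAssign S i`
lists the nodes of the suffix trie of `S` that have received labels
`0, ..., i`; the root is pre-labelled `0`, and label `i` goes to the highest
(shortest) unlabelled ancestor of the leaf of the suffix `S[i..n]` — i.e. the
shortest prefix of `S[i..n]` not yet labelled — or to the leaf itself if all
its ancestors are labelled. -/
def trieAssign {α : Type} [DecidableEq α] (S : List α) : ℕ → List (List α)
  | 0 => [([] : List α)]
  | i + 1 =>
    let prev := trieAssign S i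
    prev ++ [(((S.drop i).inits).find? (fun p => decide (p ∉ prev))).getD (S.drop i)]

lemma trieAssign_length {α : Type} [DecidableEq α] (S : List α) (m : ℕ) :
    (trieAssign S m).length = m + 1 := by
  induction m with
  | zero => rfl
  | succ k ih => simp [trieAssign, ih]

lemma trieAssign_prefix {α : Type} [DecidableEq α] (S : List α) {m m' : ℕ}
    (h : m ≤ m') : trieAssign S m <+: trieAssign S m' := by
  induction m' with
  | zero => simp_all
  | succ k ih =>
    rcases Nat.lt_or_ge m (k+1) with h' | h'
    · exact (ih (Nat.lt_succ_iff.mp h')).trans ⟨_, rfl⟩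
    · have : m = k + 1 := le_antisymm h h'
      subst this; exact List.prefix_refl _

lemma trieAssign_mem {α : Type} [DecidableEq α] (S : List α) (m : ℕ) (x : List α)
    (hx : x ∈ trieAssign S m) : x = [] ∨ ∃ k < m, x <+: S.drop k := by
  induction m with
  | zero => simp [trieAssign] at hx; exact Or.inl hx
  | succ k ih =>
    simp only [trieAssign, List.mem_append, List.mem_singleton] at hx
    rcases hx with hx | hx
    · rcases ih hx with h | ⟨k', hk', hp⟩
      · exact Or.inl h
      · exact Or.inr ⟨k', Nat.lt_succ_of_lt hk', hp⟩
    · right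
      refine ⟨k, Nat.lt_succ_self k, ?_⟩
      subst hx
      rcases h : ((S.drop k).inits).find? (fun p => decide (p ∉ trieAssign S k)) with _ | p
      · simp
      · have := List.find?_some h
        have hmem := List.mem_of_find?_eq_some h
        rw [List.mem_inits] at hmem
        simpa using hmem

-- a prefix of A ++ [c] containing c, where c ∉ A, must be the whole thing
lemma prefix_concat_mem {α : Type} [DecidableEq α] {p A : List α} {c : α}
    (hp : p <+: A ++ [c]) (hcp : c ∈ p) (hcA : c ∉ A) : p = A ++ [c] := by
  rcases List.prefix_concat_iff.mp hp with h | h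
  · exact h
  · exact absurd (h.subset hcp) hcA

lemma drop_not_mem {α : Type} [DecidableEq α] (T : List α) (c : α) (hc : c ∉ T)
    (k : ℕ) (hk : k < (T ++ [c]).length) :
    (T ++ [c]).drop k ∉ trieAssign (T ++ [c]) k := by
  intro hmem
  set S := T ++ [c] with hS
  have hSl : S.length = T.length + 1 := by simp [hS]
  rcases trieAssign_mem S k _ hmem with h | ⟨k', hk', hp⟩
  · have : S.length ≤ k := by simp [List.drop_eq_nil_iff.mp h]
    omega
  · -- S.drop k is a prefix of S.drop k', contains c
    have hcd : c ∈ S.drop k := by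
      have : S.drop k = T.drop k ++ [c] := by
        rw [hS, List.drop_append_of_le_length]
        simp [hS] at hk; omega
      simp [this]
    have hdk' : S.drop k' = T.drop k' ++ [c] := by
      rw [hS, List.drop_append_of_le_length]; omega
    have hcT : c ∉ T.drop k' := fun h => hc (List.mem_of_mem_drop h)
    have := prefix_concat_mem (hdk' ▸ hp) hcd hcT
    rw [← hdk'] at this
    have hlen := congrArg List.length this
    simp [hS] at hlen
    omega

lemma trieAssign_find?_some {α : Type} [DecidableEq α] (T : List α) (c : α)
    (hc : c ∉ T) (k : ℕ) (hk : k < (T ++ [c]).length) :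
    ∃ p, (((T ++ [c]).drop k).inits).find?
      (fun p => decide (p ∉ trieAssign (T ++ [c]) k)) = some p := by
  rw [← Option.isSome_iff_exists, List.find?_isSome]
  exact ⟨(T ++ [c]).drop k, by simp [List.mem_inits],
    by simpa using drop_not_mem T c hc k hk⟩

lemma trieAssign_nodup {α : Type} [DecidableEq α] (T : List α) (c : α)
    (hc : c ∉ T) (m : ℕ) (hm : m ≤ (T ++ [c]).length) :
    (trieAssign (T ++ [c]) m).Nodup := by
  induction m with
  | zero => simp [trieAssign]
  | succ k ih =>
    obtain ⟨p, hp⟩ := trieAssign_find?_some T c hc k (by omega)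
    have hpn : p ∉ trieAssign (T ++ [c]) k := by
      simpa using List.find?_some hp
    simp only [trieAssign, hp, Option.getD_some]
    rw [List.nodup_append]
    exact ⟨ih (by omega), by simp, by simpa using fun a ha (h : a = p) => hpn (h ▸ ha)⟩

/-- If `find?` on `inits L` returns `v`, every strict prefix of `v`
fails the predicate's negation, i.e. satisfies the "already present" side. -/
lemma find?_inits_strict_prefix {α : Type} [DecidableEq α]
    {L v u : List α} {prev : List (List α)}
    (h : (L.inits).find? (fun q => decide (q ∉ prev)) = some v)
    (huv : u <+: v) (hne : u ≠ v) : u ∈ prev := by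
  obtain ⟨hv, as, bs, heq, hall⟩ := List.find?_eq_some_iff_append.mp h
  have hlen : as.length ≤ L.length := by
    have := congrArg List.length heq
    simp [List.length_inits] at this
    omega
  have hvL : v <+: L := by
    rw [← List.mem_inits]; rw [heq]; simp
  have hvidx : v = L.take as.length := by
    have h1 : (L.inits)[as.length]? = some (L.take as.length) := by
      rw [List.getElem?_eq_getElem (by simp [List.length_inits]; omega)]
      rw [List.getElem_inits]
    rw [heq] at h1
    rw [List.getElem?_append_right (Nat.le_refl as.length)] at h1
    simpa using h1
  have hvlen : v.length = as.length := by
    rw [hvidx, List.length_take]; omega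
  have hul : u.length < as.length := by
    have := Nat.lt_of_le_of_ne (List.IsPrefix.length_le huv)
      (fun h' => hne (List.IsPrefix.eq_of_length huv h'))
    omega
  have huL : u = L.take u.length := by
    have : u <+: L := huv.trans hvL
    exact (List.prefix_iff_eq_take.mp this)
  have humem : u ∈ as := by
    have h1 : (L.inits)[u.length]? = some (L.take u.length) := by
      rw [List.getElem?_eq_getElem (by simp [List.length_inits]; omega)]
      rw [List.getElem_inits]
    rw [heq, List.getElem?_append_left (by omega)] at h1
    rw [huL]
    exact List.mem_of_getElem? h1
  have := hall u humem
  simpa using this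

/-- In the suffix-trie relabelling construction, if node `u`
receives label `i` and node `v` receives label `j` with `u` a strict ancestor
of `v` (a strict prefix of `v`'s path label), then `i < j`: along any
root-to-node path, labels strictly increase. -/
theorem trieAssign_heapOrder
    {α : Type} [DecidableEq α]
    (S T : List α) (c : α) (hS : S = T ++ [c]) (hc : c ∉ T) :
    ∀ i j : ℕ, ∀ u v : List α,
      (trieAssign S S.length)[i]? = some u →
      (trieAssign S S.length)[j]? = some v →
      u <+: v → u ≠ v → i < j := by
  subst hS
  set S := T ++ [c] with hS
  set n := S.length with hn
  intro i j u v hu hv huv hne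
  by_contra hcon
  push_neg at hcon   -- j ≤ i
  have hf : (T ++ [c]).length = n := rfl
  have hil : i < n + 1 := by
    obtain ⟨h, -⟩ := List.getElem?_eq_some_iff.mp hu
    rwa [trieAssign_length] at h
  have hjl : j < n + 1 := by
    obtain ⟨h, -⟩ := List.getElem?_eq_some_iff.mp hv
    rwa [trieAssign_length] at h
  match j, hjl with
  | 0, _ =>
    -- v = []
    have h0 : (trieAssign S n)[0]? = some ([] : List α) := by
      have hpre : trieAssign S 0 <+: trieAssign S n := trieAssign_prefix S (Nat.zero_le n)
      obtain ⟨t, ht⟩ := hpre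
      rw [← ht]
      simp [trieAssign]
    rw [h0] at hv
    have : v = [] := by simpa using hv.symm
    subst this
    exact hne (List.prefix_nil.mp huv)
  | (k+1), _ =>
    have hkn : k < n := by omega
    -- identify v
    obtain ⟨p, hp⟩ := trieAssign_find?_some T c hc k (by omega)
    have hvp : v = p := by
      have hpre : trieAssign S (k+1) <+: trieAssign S n :=
        trieAssign_prefix S (by omega)
      have hlen : k + 1 < (trieAssign S (k+1)).length := by
        rw [trieAssign_length]; omega
      have h1 : (trieAssign S (k+1))[k+1]'hlen
          = (trieAssign S n)[k+1]'(by rw [trieAssign_length]; omega) :=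
        hpre.getElem hlen
      have h2 : (trieAssign S (k+1))[k+1]'hlen = p := by
        simp only [trieAssign, hS, decide_not] at hp ⊢; simp only [hp, Option.getD_some]
        rw [List.getElem_append_right (by rw [trieAssign_length])]
        simp [trieAssign_length]
      rw [List.getElem?_eq_getElem (by rw [trieAssign_length]; omega)] at hv
      rw [← h1, h2] at hv
      exact (Option.some_inj.mp hv).symm
    subst hvp
    -- u ∈ trieAssign S k
    have humem : u ∈ trieAssign S k := find?_inits_strict_prefix hp huv hne
    obtain ⟨i', hi', hgi⟩ := List.getElem_of_mem humem
    have hi'k : i' < k + 1 := by rwa [trieAssign_length] at hi'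
    have hgi' : (trieAssign S n)[i']? = some u := by
      have hpre : trieAssign S k <+: trieAssign S n := trieAssign_prefix S (by omega)
      rw [List.getElem?_eq_getElem (by rw [trieAssign_length]; omega)]
      rw [← hpre.getElem hi', hgi]
    have : i = i' := by
      have hnd := trieAssign_nodup T c hc n (le_refl _)
      exact (List.getElem?_inj (by rwa [trieAssign_length]) hnd).mp (hu.trans hgi'.symm)
    omega
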